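/- Let p₁,p₂,p₃,p₄,p₅,q₁,q₂,q₃ ∈ ℝ and let (A₁,A₂) : ℝ → ℂ² be a differentiable solution of the system (ODE). Then the function τ ↦ |A₁(τ)|² + |A₂(τ)|² is constant on ℝ; call its value ρ. Moreover, the quadratic quantities D, R, I are differentiable and satisfy on ℝ: D' = 2I·(p₁D + (p₂-p₃)R) + 2ρp₅·I, R' = 2I·(-(p₂+p₃)D + p₁R) - 2ρp₄·I, and I' = -2p₁(D² + R²) + 4p₃·D·R + 2ρ(-p₅D + p₄R). -/

import Mathlib

/-- The real-valued quadratic form `V`. -/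
noncomputable def Vq (q₁ q₂ q₃ : ℝ) (z₁ z₂ : ℂ) : ℝ :=
  q₁ * Complex.normSq z₁ + 2 * q₂ * ((starRingEnd ℂ) z₁ * z₂).re + q₃ * Complex.normSq z₂

/-- The first cubic nonlinearity `F₁`. -/
noncomputable def F₁ (p₁ p₂ p₃ p₄ p₅ q₁ q₂ q₃ : ℝ) (z₁ z₂ : ℂ) : ℂ :=
  (3 * p₂ + p₃ + 2 * p₄) * Complex.normSq z₁ * z₁
  + (p₁ + p₅) * (2 * Complex.normSq z₁ * z₂ + z₁ ^ 2 * (starRingEnd ℂ) z₂)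
  + (p₂ - p₃) * (2 * z₁ * Complex.normSq z₂ + (starRingEnd ℂ) z₁ * z₂ ^ 2)
  - (p₁ - p₅) * Complex.normSq z₂ * z₂
  - 4 * p₁ * (((starRingEnd ℂ) z₁ * z₂).re : ℝ) * z₁
  + (Vq q₁ q₂ q₃ z₁ z₂ : ℝ) * z₁

/-- The second cubic nonlinearity `F₂`. -/
noncomputable def F₂ (p₁ p₂ p₃ p₄ p₅ q₁ q₂ q₃ : ℝ) (z₁ z₂ : ℂ) : ℂ :=
  (p₁ + p₅) * Complex.normSq z₁ * z₁
  + (p₂ - p₃) * (2 * Complex.normSq z₁ * z₂ + z₁ ^ 2 * (starRingEnd ℂ) z₂)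
  - (p₁ - p₅) * (2 * z₁ * Complex.normSq z₂ + (starRingEnd ℂ) z₁ * z₂ ^ 2)
  + (3 * p₂ + p₃ - 2 * p₄) * Complex.normSq z₂ * z₂
  + 4 * p₁ * (((starRingEnd ℂ) z₁ * z₂).re : ℝ) * z₂
  + (Vq q₁ q₂ q₃ z₁ z₂ : ℝ) * z₂

/-- The quadratic quantity `D = |A₁|² - |A₂|²`. -/
noncomputable def Dq (A₁ A₂ : ℝ → ℂ) (τ : ℝ) : ℝ :=
  Complex.normSq (A₁ τ) - Complex.normSq (A₂ τ)

/-- The quadratic quantity `R = 2 Re (conj A₁ · A₂)`. -/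
noncomputable def Rq (A₁ A₂ : ℝ → ℂ) (τ : ℝ) : ℝ :=
  2 * ((starRingEnd ℂ) (A₁ τ) * A₂ τ).re

/-- The quadratic quantity `I = 2 Im (conj A₁ · A₂)`. -/
noncomputable def Iq (A₁ A₂ : ℝ → ℂ) (τ : ℝ) : ℝ :=
  2 * ((starRingEnd ℂ) (A₁ τ) * A₂ τ).im

lemma aux_hasDerivAt_re {A : ℝ → ℂ} {a' : ℂ} {τ : ℝ} (h : HasDerivAt A a' τ) :
    HasDerivAt (fun t => (A t).re) a'.re τ :=
  Complex.reCLM.hasFDerivAt.comp_hasDerivAt τ h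

lemma aux_hasDerivAt_im {A : ℝ → ℂ} {a' : ℂ} {τ : ℝ} (h : HasDerivAt A a' τ) :
    HasDerivAt (fun t => (A t).im) a'.im τ :=
  Complex.imCLM.hasFDerivAt.comp_hasDerivAt τ h

lemma aux_hasDerivAt_normSq {A : ℝ → ℂ} {a' : ℂ} {τ : ℝ} (h : HasDerivAt A a' τ) :
    HasDerivAt (fun t => Complex.normSq (A t))
      (2 * ((A τ).re * a'.re + (A τ).im * a'.im)) τ := by
  have h1 := ((aux_hasDerivAt_re h).mul (aux_hasDerivAt_re h)).add
    ((aux_hasDerivAt_im h).mul (aux_hasDerivAt_im h))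
  have heq : (fun t => (A t).re * (A t).re + (A t).im * (A t).im)
      = fun t => Complex.normSq (A t) := by
    funext t; simp [Complex.normSq_apply]
  simp only [Pi.mul_def, Pi.add_def] at h1
  rw [heq] at h1
  convert h1 using 1; rfl; rfl; ring

lemma aux_hasDerivAt_reConjMul {A B : ℝ → ℂ} {a' b' : ℂ} {τ : ℝ}
    (hA : HasDerivAt A a' τ) (hB : HasDerivAt B b' τ) :
    HasDerivAt (fun t => 2 * ((starRingEnd ℂ) (A t) * B t).re)
      (2 * (a'.re * (B τ).re + (A τ).re * b'.re + a'.im * (B τ).im + (A τ).im * b'.im)) τ := by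
  have h1 := (((aux_hasDerivAt_re hA).mul (aux_hasDerivAt_re hB)).add
    ((aux_hasDerivAt_im hA).mul (aux_hasDerivAt_im hB))).const_mul (2 : ℝ)
  have heq : (fun t => 2 * ((A t).re * (B t).re + (A t).im * (B t).im))
      = fun t => 2 * ((starRingEnd ℂ) (A t) * B t).re := by
    funext t; simp [Complex.mul_re, Complex.conj_re, Complex.conj_im]; try ring
  simp only [Pi.mul_def, Pi.add_def] at h1
  rw [heq] at h1
  convert h1 using 1; rfl; rfl; ring

lemma aux_hasDerivAt_imConjMul {A B : ℝ → ℂ} {a' b' : ℂ} {τ : ℝ}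
    (hA : HasDerivAt A a' τ) (hB : HasDerivAt B b' τ) :
    HasDerivAt (fun t => 2 * ((starRingEnd ℂ) (A t) * B t).im)
      (2 * (a'.re * (B τ).im + (A τ).re * b'.im - a'.im * (B τ).re - (A τ).im * b'.re)) τ := by
  have h1 := (((aux_hasDerivAt_re hA).mul (aux_hasDerivAt_im hB)).sub
    ((aux_hasDerivAt_im hA).mul (aux_hasDerivAt_re hB))).const_mul (2 : ℝ)
  have heq : (fun t => 2 * ((A t).re * (B t).im - (A t).im * (B t).re))
      = fun t => 2 * ((starRingEnd ℂ) (A t) * B t).im := by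
    funext t; simp [Complex.mul_im, Complex.conj_re, Complex.conj_im]; try ring
  simp only [Pi.mul_def, Pi.sub_def] at h1
  rw [heq] at h1
  convert h1 using 1; rfl; rfl; ring

/-- Along any solution of the ODE system, `|A₁|² + |A₂|²` is conserved and the
quadratic quantities `(D, R, I)` solve the quadratic system (QQQ). -/
theorem stmt_13 (p₁ p₂ p₃ p₄ p₅ q₁ q₂ q₃ : ℝ)
    (A₁ A₂ A₁' A₂' : ℝ → ℂ)
    (hA₁ : ∀ τ, HasDerivAt A₁ (A₁' τ) τ)
    (hA₂ : ∀ τ, HasDerivAt A₂ (A₂' τ) τ)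
    (hODE₁ : ∀ τ, Complex.I * A₁' τ = F₁ p₁ p₂ p₃ p₄ p₅ q₁ q₂ q₃ (A₁ τ) (A₂ τ))
    (hODE₂ : ∀ τ, Complex.I * A₂' τ = F₂ p₁ p₂ p₃ p₄ p₅ q₁ q₂ q₃ (A₁ τ) (A₂ τ))
    (ρ : ℝ) (hρ : ρ = Complex.normSq (A₁ 0) + Complex.normSq (A₂ 0)) :
    (∀ τ : ℝ, Complex.normSq (A₁ τ) + Complex.normSq (A₂ τ) = ρ) ∧
    (∀ τ : ℝ, HasDerivAt (Dq A₁ A₂)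
        (2 * Iq A₁ A₂ τ * (p₁ * Dq A₁ A₂ τ + (p₂ - p₃) * Rq A₁ A₂ τ)
          + 2 * ρ * p₅ * Iq A₁ A₂ τ) τ) ∧
    (∀ τ : ℝ, HasDerivAt (Rq A₁ A₂)
        (2 * Iq A₁ A₂ τ * (-((p₂ + p₃) * Dq A₁ A₂ τ) + p₁ * Rq A₁ A₂ τ)
          - 2 * ρ * p₄ * Iq A₁ A₂ τ) τ) ∧
    (∀ τ : ℝ, HasDerivAt (Iq A₁ A₂)
        (-(2 * p₁ * (Dq A₁ A₂ τ ^ 2 + Rq A₁ A₂ τ ^ 2)) + 4 * p₃ * Dq A₁ A₂ τ * Rq A₁ A₂ τ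
          + 2 * ρ * (-(p₅ * Dq A₁ A₂ τ) + p₄ * Rq A₁ A₂ τ)) τ) := by
  have ha' : ∀ τ, A₁' τ = -Complex.I * F₁ p₁ p₂ p₃ p₄ p₅ q₁ q₂ q₃ (A₁ τ) (A₂ τ) := by
    intro τ
    rw [← hODE₁ τ, ← mul_assoc, neg_mul, Complex.I_mul_I, neg_neg, one_mul]
  have hb' : ∀ τ, A₂' τ = -Complex.I * F₂ p₁ p₂ p₃ p₄ p₅ q₁ q₂ q₃ (A₁ τ) (A₂ τ) := by
    intro τ
    rw [← hODE₂ τ, ← mul_assoc, neg_mul, Complex.I_mul_I, neg_neg, one_mul]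
  -- conservation
  have hNderiv : ∀ τ : ℝ, HasDerivAt
      (fun t => Complex.normSq (A₁ t) + Complex.normSq (A₂ t)) 0 τ := by
    intro τ
    have h := (aux_hasDerivAt_normSq (hA₁ τ)).add (aux_hasDerivAt_normSq (hA₂ τ))
    simp only [Pi.add_def] at h
    convert h using 1
    rfl
    rfl
    rw [ha' τ, hb' τ]
    simp only [F₁, F₂, Vq, Complex.normSq_apply, Complex.mul_re, Complex.mul_im,
      Complex.add_re, Complex.add_im, Complex.sub_re, Complex.sub_im, Complex.neg_re,
      Complex.neg_im, Complex.ofReal_re, Complex.ofReal_im, Complex.I_re, Complex.I_im,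
      Complex.conj_re, Complex.conj_im, pow_two, Complex.re_ofNat, Complex.im_ofNat,
      Complex.one_re, Complex.one_im]
    ring
  have hcons : ∀ τ : ℝ, Complex.normSq (A₁ τ) + Complex.normSq (A₂ τ) = ρ := by
    intro τ
    rw [hρ]
    exact is_const_of_deriv_eq_zero (fun t => (hNderiv t).differentiableAt)
      (fun t => (hNderiv t).deriv) τ 0
  refine ⟨hcons, ?_, ?_, ?_⟩
  · intro τ
    have h := (aux_hasDerivAt_normSq (hA₁ τ)).sub (aux_hasDerivAt_normSq (hA₂ τ))
    have hfun : (fun t => Complex.normSq (A₁ t) - Complex.normSq (A₂ t)) = Dq A₁ A₂ := rfl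
    simp only [Pi.sub_def] at h
    rw [hfun] at h
    convert h using 1
    rfl
    rfl
    rw [show ρ = Complex.normSq (A₁ τ) + Complex.normSq (A₂ τ) from (hcons τ).symm,
      ha' τ, hb' τ]
    simp only [Dq, Rq, Iq, F₁, F₂, Vq, Complex.normSq_apply, Complex.mul_re, Complex.mul_im,
      Complex.add_re, Complex.add_im, Complex.sub_re, Complex.sub_im, Complex.neg_re,
      Complex.neg_im, Complex.ofReal_re, Complex.ofReal_im, Complex.I_re, Complex.I_im,
      Complex.conj_re, Complex.conj_im, pow_two, Complex.re_ofNat, Complex.im_ofNat,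
      Complex.one_re, Complex.one_im]
    ring
  · intro τ
    have h := aux_hasDerivAt_reConjMul (hA₁ τ) (hA₂ τ)
    have hfun : (fun t => 2 * ((starRingEnd ℂ) (A₁ t) * A₂ t).re) = Rq A₁ A₂ := rfl
    rw [hfun] at h
    convert h using 1
    rw [show ρ = Complex.normSq (A₁ τ) + Complex.normSq (A₂ τ) from (hcons τ).symm,
      ha' τ, hb' τ]
    simp only [Dq, Rq, Iq, F₁, F₂, Vq, Complex.normSq_apply, Complex.mul_re, Complex.mul_im,
      Complex.add_re, Complex.add_im, Complex.sub_re, Complex.sub_im, Complex.neg_re,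
      Complex.neg_im, Complex.ofReal_re, Complex.ofReal_im, Complex.I_re, Complex.I_im,
      Complex.conj_re, Complex.conj_im, pow_two, Complex.re_ofNat, Complex.im_ofNat,
      Complex.one_re, Complex.one_im]
    ring
  · intro τ
    have h := aux_hasDerivAt_imConjMul (hA₁ τ) (hA₂ τ)
    have hfun : (fun t => 2 * ((starRingEnd ℂ) (A₁ t) * A₂ t).im) = Iq A₁ A₂ := rfl
    rw [hfun] at h
    convert h using 1
    rw [show ρ = Complex.normSq (A₁ τ) + Complex.normSq (A₂ τ) from (hcons τ).symm,
      ha' τ, hb' τ]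
    simp only [Dq, Rq, Iq, F₁, F₂, Vq, Complex.normSq_apply, Complex.mul_re, Complex.mul_im,
      Complex.add_re, Complex.add_im, Complex.sub_re, Complex.sub_im, Complex.neg_re,
      Complex.neg_im, Complex.ofReal_re, Complex.ofReal_im, Complex.I_re, Complex.I_im,
      Complex.conj_re, Complex.conj_im, pow_two, Complex.re_ofNat, Complex.im_ofNat,
      Complex.one_re, Complex.one_im]
    ring
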